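/- Let (M,d) be a homogeneous metric space. Then Iso(M,d), with the topology of pointwise convergence, is locally compact, σ-compact and second countable. Moreover, if G is a closed subgroup of Iso(M,d) that acts transitively on M and S is the stabiliser in G of a point o ∈ M, then the map gS ↦ g(o) is a homeomorphism from the quotient space G/S onto M. -/

import Mathlib

open Metric Set Filter Topology

namespace S12

variable {M : Type*} [MetricSpace M]

/-- Chains of steps of length ≤ δ starting at x₀. -/
def chain (x₀ : M) (δ : ℝ) : ℕ → Set M
  | 0 => {x₀}
  | n+1 => {x | ∃ y ∈ chain x₀ δ n, dist x y ≤ δ}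

theorem chain_mono {x₀ : M} {δ : ℝ} (hδ : 0 ≤ δ) : Monotone (chain x₀ δ) := by
  apply monotone_nat_of_le_succ
  intro n x hx
  exact ⟨x, hx, by simpa using hδ⟩

theorem chain_succ {x₀ : M} {δ : ℝ} {n : ℕ} {x : M} :
    x ∈ chain x₀ δ (n+1) ↔ ∃ y ∈ chain x₀ δ n, dist x y ≤ δ := Iff.rfl

theorem isometry_image_chain {x₀ : M} {δ : ℝ} {f : M → M} (hf : Isometry f)
    {m : ℕ} (hm : f x₀ ∈ chain x₀ δ m) (hδ : 0 ≤ δ) :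
    ∀ n, f '' chain x₀ δ n ⊆ chain x₀ δ (m + n) := by
  intro n
  induction n with
  | zero => rintro _ ⟨y, rfl, rfl⟩; exact hm
  | succ n ih =>
    rintro _ ⟨x, ⟨y, hy, hxy⟩, rfl⟩
    exact ⟨f y, ih ⟨y, hy, rfl⟩, by rw [hf.dist_eq]; exact hxy⟩

theorem chain_isCompact {x₀ : M} {ρ : ℝ} (hρ : 0 < ρ)
    (hball : ∀ x : M, IsCompact (closedBall x ρ)) :
    ∀ n, IsCompact (chain x₀ (ρ/2) n) := by
  intro n
  induction n with
  | zero => exact isCompact_singleton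
  | succ n ih =>
    -- cover chain n by finitely many balls of radius ρ/2
    obtain ⟨t, hts, htfin, ht⟩ := ih.elim_finite_subcover_image (ι := M)
      (fun y _ => isOpen_ball (x := y) (ε := ρ/2)) (fun x hx => by
        exact mem_iUnion₂.2 ⟨x, hx, mem_ball_self (by linarith)⟩)
    have hKc : IsCompact (⋃ y ∈ t, closedBall y ρ) :=
      htfin.isCompact_biUnion (fun y _ => hball y)
    -- chain (n+1) is the image under fst of a closed subset of (⋃ balls) × chain n
    have key : chain x₀ (ρ/2) (n+1) =
        Prod.fst '' {p : M × M | p.1 ∈ (⋃ y ∈ t, closedBall y ρ) ∧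
          p.2 ∈ chain x₀ (ρ/2) n ∧ dist p.1 p.2 ≤ ρ/2} := by
      ext x
      constructor
      · rintro ⟨y, hy, hxy⟩
        obtain ⟨z, hz⟩ := mem_iUnion₂.1 (ht hy)
        obtain ⟨hzt, hyz⟩ := hz
        refine ⟨(x, y), ⟨mem_iUnion₂.2 ⟨z, hzt, ?_⟩, hy, hxy⟩, rfl⟩
        · rw [mem_closedBall]
          have := mem_ball.1 hyz
          calc dist x z ≤ dist x y + dist y z := dist_triangle _ _ _
            _ ≤ ρ/2 + ρ/2 := by linarith [mem_ball.1 hyz]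
            _ = ρ := by ring
      · rintro ⟨⟨a, b⟩, ⟨_, hb, hab⟩, rfl⟩
        exact ⟨b, hb, hab⟩
    rw [key]
    apply IsCompact.image _ continuous_fst
    apply hKc.prod ih |>.of_isClosed_subset
    · apply IsClosed.inter (IsClosed.preimage continuous_fst hKc.isClosed)
      apply IsClosed.inter (IsClosed.preimage continuous_snd (ih.isClosed))
      exact isClosed_le (continuous_fst.dist continuous_snd) continuous_const
    · rintro ⟨a, b⟩ ⟨h1, h2, h3⟩
      exact ⟨h1, h2⟩

theorem chain_iUnion_eq_univ [ConnectedSpace M] {x₀ : M} {ρ : ℝ} (hρ : 0 < ρ) :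
    (⋃ n, chain x₀ (ρ/2) n) = univ := by
  have hδ : (0:ℝ) < ρ/2 := by linarith
  apply IsClopen.eq_univ
  · constructor
    · rw [← closure_eq_iff_isClosed]
      apply Subset.antisymm _ subset_closure
      intro x hx
      obtain ⟨y, hy, hyU⟩ := Metric.mem_closure_iff.1 hx (ρ/2) hδ
      obtain ⟨n, hn⟩ := mem_iUnion.1 hy
      exact mem_iUnion.2 ⟨n+1, ⟨y, hn, le_of_lt hyU⟩⟩
    · -- open
      rw [isOpen_iff_mem_nhds]
      intro x hx
      obtain ⟨n, hn⟩ := mem_iUnion.1 hx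
      filter_upwards [Metric.ball_mem_nhds x hδ] with y hy
      exact mem_iUnion.2 ⟨n+1, ⟨x, hn, le_of_lt (by simpa [dist_comm] using hy)⟩⟩
  · exact ⟨x₀, mem_iUnion.2 ⟨0, rfl⟩⟩


/-! ### Topology on the isometry group -/

def isoT (M : Type*) [MetricSpace M] : TopologicalSpace (M ≃ᵢ M) :=
  TopologicalSpace.induced (fun f : M ≃ᵢ M => (⇑f : M → M)) Pi.topologicalSpace

section Topology

attribute [local instance] isoT

theorem inducing_coe : Topology.IsInducing (fun f : M ≃ᵢ M => (⇑f : M → M)) := ⟨rfl⟩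

theorem coe_injective : Function.Injective (fun f : M ≃ᵢ M => (⇑f : M → M)) :=
  fun f g h => IsometryEquiv.ext (fun x => congrFun h x)

theorem embedding_coe : Topology.IsEmbedding (fun f : M ≃ᵢ M => (⇑f : M → M)) :=
  ⟨inducing_coe, coe_injective⟩

instance isoT2 : T2Space (M ≃ᵢ M) := embedding_coe.t2Space

theorem continuous_eval_const (x : M) : Continuous fun f : M ≃ᵢ M => f x :=
  (continuous_apply x).comp inducing_coe.continuous

theorem continuous_eval : Continuous fun p : (M ≃ᵢ M) × M => p.1 p.2 := by
  rw [continuous_iff_continuousAt]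
  rintro ⟨f, y⟩
  rw [ContinuousAt, Metric.tendsto_nhds]
  intro ε hε
  have h1 : ∀ᶠ p : (M ≃ᵢ M) × M in 𝓝 (f, y), dist (p.1 y) (f y) < ε/2 :=
    (Metric.tendsto_nhds.1 (((continuous_eval_const y).comp continuous_fst).continuousAt)
      (ε/2) (by linarith))
  have h2 : ∀ᶠ p : (M ≃ᵢ M) × M in 𝓝 (f, y), dist p.2 y < ε/2 :=
    (Metric.tendsto_nhds.1 (continuous_snd.continuousAt) (ε/2) (by linarith))
  filter_upwards [h1, h2] with p hp1 hp2
  calc dist (p.1 p.2) (f y) ≤ dist (p.1 p.2) (p.1 y) + dist (p.1 y) (f y) := dist_triangle _ _ _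
    _ = dist p.2 y + dist (p.1 y) (f y) := by rw [IsometryEquiv.dist_eq]
    _ < ε/2 + ε/2 := by linarith
    _ = ε := by ring

instance isoTopGroup : IsTopologicalGroup (M ≃ᵢ M) where
  continuous_mul := by
    apply inducing_coe.continuous_iff.2
    apply continuous_pi
    intro x
    exact continuous_eval.comp
      (continuous_fst.prodMk ((continuous_eval_const x).comp continuous_snd))
  continuous_inv := by
    rw [continuous_iff_continuousAt]
    intro f
    rw [ContinuousAt, inducing_coe.tendsto_nhds_iff]
    rw [tendsto_pi_nhds]
    intro x
    rw [tendsto_iff_dist_tendsto_zero]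
    show Filter.Tendsto (fun g : M ≃ᵢ M => dist (g⁻¹ x) (f⁻¹ x)) (𝓝 f) (𝓝 0)
    have key : (fun g : M ≃ᵢ M => dist (g⁻¹ x) (f⁻¹ x)) =
        fun g : M ≃ᵢ M => dist x (g (f⁻¹ x)) := by
      funext g
      rw [← IsometryEquiv.dist_eq g (g⁻¹ x) (f⁻¹ x), IsometryEquiv.apply_inv_self]
    rw [key]
    have : Filter.Tendsto (fun g : M ≃ᵢ M => dist x (g (f⁻¹ x))) (𝓝 f)
        (𝓝 (dist x (f (f⁻¹ x)))) :=
      (tendsto_const_nhds.dist ((continuous_eval_const (f⁻¹ x)).tendsto f))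
    simpa using this


/-- The set of isometric embeddings sending `x₀` into `chain m` is compact in `M → M`. -/
theorem isCompact_isometrySet (x₀ : M) {ρ : ℝ} (hρ : 0 < ρ)
    (hball : ∀ x : M, IsCompact (closedBall x ρ))
    (hcover : (⋃ n, chain x₀ (ρ/2) n) = univ) (m : ℕ) :
    IsCompact {F : M → M | Isometry F ∧ F x₀ ∈ chain x₀ (ρ/2) m} := by
  have hmem : ∀ x : M, ∃ n, x ∈ chain x₀ (ρ/2) n := fun x =>
    mem_iUnion.1 (hcover ▸ mem_univ x)
  choose nn hnn using hmem
  have hsub : {F : M → M | Isometry F ∧ F x₀ ∈ chain x₀ (ρ/2) m} ⊆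
      univ.pi (fun x => chain x₀ (ρ/2) (m + nn x)) := by
    rintro F ⟨hF, hFx⟩ x _
    exact isometry_image_chain hF hFx (le_of_lt (by linarith)) (nn x) ⟨x, hnn x, rfl⟩
  apply (isCompact_univ_pi (fun x => chain_isCompact hρ hball (m + nn x))).of_isClosed_subset
    _ hsub
  have h1 : IsClosed {F : M → M | Isometry F} := by
    have : {F : M → M | Isometry F} = ⋂ (x) (y), {F : M → M | dist (F x) (F y) = dist x y} := by
      ext F
      simp only [mem_setOf_eq, mem_iInter]
      exact ⟨fun h x y => h.dist_eq x y, fun h => Isometry.of_dist_eq h⟩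
    rw [this]
    exact isClosed_iInter fun x => isClosed_iInter fun y =>
      isClosed_eq ((continuous_apply x).dist (continuous_apply y)) continuous_const
  exact h1.inter (IsClosed.preimage (continuous_apply x₀)
    (chain_isCompact hρ hball m).isClosed)

/-- The pairs `(F, G)` with `G` an isometry and `G ∘ F = id` form a closed set. -/
theorem isClosed_mutual :
    IsClosed {p : (M → M) × (M → M) | Isometry p.2 ∧ ∀ x, p.2 (p.1 x) = x} := by
  rw [← closure_eq_iff_isClosed]
  apply Subset.antisymm _ subset_closure
  rintro ⟨F, G⟩ hp
  have hcl2 : IsClosed {p : (M → M) × (M → M) | Isometry p.2} := by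
    have : {p : (M → M) × (M → M) | Isometry p.2} =
        ⋂ (x) (y), {p : (M → M) × (M → M) | dist (p.2 x) (p.2 y) = dist x y} := by
      ext p
      simp only [mem_setOf_eq, mem_iInter]
      exact ⟨fun h x y => h.dist_eq x y, fun h => Isometry.of_dist_eq h⟩
    rw [this]
    exact isClosed_iInter fun x => isClosed_iInter fun y =>
      isClosed_eq (((continuous_apply x).comp continuous_snd).dist
        ((continuous_apply y).comp continuous_snd)) continuous_const
  have hGiso : Isometry G := by
    have := closure_mono (show {p : (M → M) × (M → M) |
        Isometry p.2 ∧ ∀ x, p.2 (p.1 x) = x} ⊆ {p | Isometry p.2} from fun p hp => hp.1) hp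
    rwa [hcl2.closure_eq] at this
  refine ⟨hGiso, fun x => ?_⟩
  by_contra hne
  have hc : 0 < dist (G (F x)) x := dist_pos.2 hne
  set ε := dist (G (F x)) x with hε
  set O : Set ((M → M) × (M → M)) :=
    {q | dist (q.1 x) (F x) < ε/2 ∧ dist (q.2 (F x)) (G (F x)) < ε/2} with hO
  have hOopen : IsOpen O := by
    apply IsOpen.inter
    · exact isOpen_lt (((continuous_apply x).comp continuous_fst).dist continuous_const)
        continuous_const
    · exact isOpen_lt (((continuous_apply (F x)).comp continuous_snd).dist continuous_const)
        continuous_const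
  have hpO : (F, G) ∈ O := by
    constructor <;> simp only [mem_setOf_eq, dist_self] <;> linarith
  obtain ⟨q, hqO, hqW⟩ := _root_.mem_closure_iff.1 hp O hOopen hpO
  obtain ⟨hq1, hq2⟩ := hqO
  have : ε < ε := by
    calc ε = dist (G (F x)) (q.2 (q.1 x)) := by rw [hqW.2 x]
      _ ≤ dist (G (F x)) (q.2 (F x)) + dist (q.2 (F x)) (q.2 (q.1 x)) := dist_triangle _ _ _
      _ = dist (G (F x)) (q.2 (F x)) + dist (F x) (q.1 x) := by rw [hqW.1.dist_eq]
      _ < ε/2 + ε/2 := by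
          rw [dist_comm (G (F x)) (q.2 (F x)), dist_comm (F x) (q.1 x)]
          exact add_lt_add hq2 hq1
      _ = ε := by ring
  exact absurd this (lt_irrefl ε)

/-- Key compactness: isometry equivs with `f x₀` and `f⁻¹ x₀` in `chain m` form a
compact set. -/
theorem isCompact_isoSet (x₀ : M) {ρ : ℝ} (hρ : 0 < ρ)
    (hball : ∀ x : M, IsCompact (closedBall x ρ))
    (hcover : (⋃ n, chain x₀ (ρ/2) n) = univ) (m : ℕ) :
    IsCompact {f : M ≃ᵢ M | f x₀ ∈ chain x₀ (ρ/2) m ∧ f⁻¹ x₀ ∈ chain x₀ (ρ/2) m} := by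
  rw [inducing_coe.isCompact_iff]
  set P := {F : M → M | Isometry F ∧ F x₀ ∈ chain x₀ (ρ/2) m} with hP
  set W₁ := {p : (M → M) × (M → M) | Isometry p.2 ∧ ∀ x, p.2 (p.1 x) = x} with hW₁
  set W₂ := Prod.swap ⁻¹' W₁ with hW₂
  set Q := (P ×ˢ P) ∩ (W₁ ∩ W₂) with hQ
  have hQc : IsCompact Q :=
    ((isCompact_isometrySet x₀ hρ hball hcover m).prod
      (isCompact_isometrySet x₀ hρ hball hcover m)).inter_right
      (isClosed_mutual.inter (isClosed_mutual.preimage continuous_swap))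
  have himg : (fun f : M ≃ᵢ M => (⇑f : M → M)) ''
      {f : M ≃ᵢ M | f x₀ ∈ chain x₀ (ρ/2) m ∧ f⁻¹ x₀ ∈ chain x₀ (ρ/2) m} =
      Prod.fst '' Q := by
    ext F
    constructor
    · rintro ⟨f, ⟨hf1, hf2⟩, rfl⟩
      refine ⟨(⇑f, ⇑f⁻¹), ⟨⟨⟨f.isometry, hf1⟩, ⟨(f⁻¹).isometry, hf2⟩⟩, ?_, ?_⟩, rfl⟩
      · exact ⟨(f⁻¹).isometry, fun x => f.inv_apply_self x⟩
      · exact ⟨f.isometry, fun x => f.apply_inv_self x⟩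
    · rintro ⟨⟨F, G⟩, ⟨⟨⟨hFiso, hFx⟩, ⟨hGiso, hGx⟩⟩, ⟨_, hGF⟩, ⟨_, hFG⟩⟩, rfl⟩
      refine ⟨⟨⟨F, G, hGF, hFG⟩, hFiso⟩, ⟨hFx, hGx⟩, rfl⟩
  rw [himg]
  exact hQc.image continuous_fst


theorem exists_uniform_ball [LocallyCompactSpace M] (x₀ : M)
    (hhom : ∀ x y : M, ∃ f : M ≃ᵢ M, f x = y) :
    ∃ ρ : ℝ, 0 < ρ ∧ ∀ x : M, IsCompact (closedBall x ρ) := by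
  obtain ⟨K, hKc, hKn⟩ := exists_compact_mem_nhds x₀
  obtain ⟨ρ, hρ, hsub⟩ := Metric.nhds_basis_closedBall.mem_iff.1 hKn
  have h0 : IsCompact (closedBall x₀ ρ) :=
    hKc.of_isClosed_subset Metric.isClosed_closedBall hsub
  refine ⟨ρ, hρ, fun x => ?_⟩
  obtain ⟨f, hf⟩ := hhom x₀ x
  have himg : closedBall x ρ = f '' closedBall x₀ ρ := by
    rw [← hf, IsometryEquiv.image_closedBall]
  rw [himg]
  exact h0.image f.continuous

section Main

variable [ConnectedSpace M] [LocallyCompactSpace M]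

theorem isoSet_mem_nhds_one (x₀ : M) {ρ : ℝ} (hρ : 0 < ρ) :
    {f : M ≃ᵢ M | f x₀ ∈ chain x₀ (ρ/2) 1 ∧ f⁻¹ x₀ ∈ chain x₀ (ρ/2) 1} ∈ 𝓝 (1 : M ≃ᵢ M) := by
  have hδ : (0:ℝ) < ρ/2 := by linarith
  have hUopen : IsOpen {f : M ≃ᵢ M | dist (f x₀) x₀ < ρ/2 ∧ dist (f⁻¹ x₀) x₀ < ρ/2} := by
    apply IsOpen.inter
    · exact isOpen_lt ((continuous_eval_const x₀).dist continuous_const) continuous_const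
    · exact isOpen_lt (((continuous_eval_const x₀).comp continuous_inv).dist continuous_const)
        continuous_const
  apply _root_.mem_nhds_iff.2
  refine ⟨_, ?_, hUopen, by simp [hδ]⟩
  rintro f ⟨h1, h2⟩
  exact ⟨⟨x₀, rfl, le_of_lt h1⟩, ⟨x₀, rfl, le_of_lt h2⟩⟩

theorem isoLocallyCompact (hhom : ∀ x y : M, ∃ f : M ≃ᵢ M, f x = y) :
    LocallyCompactSpace (M ≃ᵢ M) := by
  have x₀ : M := Nonempty.some inferInstance
  obtain ⟨ρ, hρ, hball⟩ := exists_uniform_ball x₀ hhom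
  exact (isCompact_isoSet x₀ hρ hball (chain_iUnion_eq_univ hρ) 1
    ).locallyCompactSpace_of_mem_nhds_of_group (isoSet_mem_nhds_one x₀ hρ)

theorem isoSigmaCompact (hhom : ∀ x y : M, ∃ f : M ≃ᵢ M, f x = y) :
    SigmaCompactSpace (M ≃ᵢ M) := by
  have x₀ : M := Nonempty.some inferInstance
  obtain ⟨ρ, hρ, hball⟩ := exists_uniform_ball x₀ hhom
  have hcover := chain_iUnion_eq_univ (x₀ := x₀) hρ
  refine ⟨⟨fun m => {f : M ≃ᵢ M | f x₀ ∈ chain x₀ (ρ/2) m ∧ f⁻¹ x₀ ∈ chain x₀ (ρ/2) m},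
    fun m => isCompact_isoSet x₀ hρ hball hcover m, ?_⟩⟩
  apply eq_univ_iff_forall.2
  intro f
  have h1 : ∃ n, f x₀ ∈ chain x₀ (ρ/2) n := mem_iUnion.1 (hcover ▸ mem_univ _)
  have h2 : ∃ n, f⁻¹ x₀ ∈ chain x₀ (ρ/2) n := mem_iUnion.1 (hcover ▸ mem_univ _)
  obtain ⟨n1, hn1⟩ := h1
  obtain ⟨n2, hn2⟩ := h2
  refine mem_iUnion.2 ⟨max n1 n2, ?_, ?_⟩
  · exact chain_mono (le_of_lt (by linarith)) (le_max_left n1 n2) hn1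
  · exact chain_mono (le_of_lt (by linarith)) (le_max_right n1 n2) hn2

theorem isoSecondCountable (hhom : ∀ x y : M, ∃ f : M ≃ᵢ M, f x = y) :
    SecondCountableTopology (M ≃ᵢ M) := by
  have x₀ : M := Nonempty.some inferInstance
  obtain ⟨ρ, hρ, hball⟩ := exists_uniform_ball x₀ hhom
  haveI : SigmaCompactSpace M :=
    ⟨⟨chain x₀ (ρ/2), fun n => chain_isCompact hρ hball n, chain_iUnion_eq_univ hρ⟩⟩
  haveI : SecondCountableTopology M := EMetric.secondCountable_of_sigmaCompact M
  obtain ⟨D, hDc, hDd⟩ := TopologicalSpace.exists_countable_dense M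
  haveI : Countable D := hDc.to_subtype
  set r : (M ≃ᵢ M) → (D → M) := fun f d => f d with hr
  have hrinj : Function.Injective r := by
    intro f g h
    apply IsometryEquiv.ext
    have hfg : (⇑f : M → M) = ⇑g :=
      Continuous.ext_on hDd f.continuous g.continuous (fun d hd => congrFun h ⟨d, hd⟩)
    exact fun x => congrFun hfg x
  have hrcont : Continuous r := continuous_pi fun d => continuous_eval_const (d : M)
  have hard : @Continuous (M ≃ᵢ M) (M → M) (TopologicalSpace.induced r Pi.topologicalSpace) _
      (fun f : M ≃ᵢ M => (⇑f : M → M)) := by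
    letI : TopologicalSpace (M ≃ᵢ M) := TopologicalSpace.induced r Pi.topologicalSpace
    apply continuous_pi
    intro x
    rw [continuous_iff_continuousAt]
    intro f
    rw [ContinuousAt, Metric.tendsto_nhds]
    intro ε hε
    obtain ⟨d, hdD, hdx⟩ : ∃ d ∈ D, dist x d < ε/3 :=
      Metric.mem_closure_iff.1 (hDd x) (ε/3) (by linarith)
    have hev : Continuous fun g : M ≃ᵢ M => r g ⟨d, hdD⟩ :=
      (continuous_apply (⟨d, hdD⟩ : D)).comp (continuous_induced_dom (f := r))
    have hmem : {g : M ≃ᵢ M | dist (g d) (f d) < ε/3} ∈ 𝓝 f :=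
      hev.continuousAt.preimage_mem_nhds (Metric.ball_mem_nhds (r f ⟨d, hdD⟩) (by linarith))
    filter_upwards [hmem] with g hg
    calc dist (g x) (f x) ≤ dist (g x) (g d) + dist (g d) (f d) + dist (f d) (f x) :=
          dist_triangle4 _ _ _ _
      _ = dist x d + dist (g d) (f d) + dist d x := by
          rw [IsometryEquiv.dist_eq, IsometryEquiv.dist_eq]
      _ < ε/3 + ε/3 + ε/3 := by
          have := hdx
          rw [dist_comm d x]
          exact add_lt_add (add_lt_add hdx hg) hdx
      _ = ε := by ring
  have hrind : Topology.IsInducing r := by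
    rw [Topology.isInducing_iff]
    exact le_antisymm (continuous_iff_le_induced.1 hrcont) (continuous_iff_le_induced.1 hard)
  haveI := (Topology.IsEmbedding.mk hrind hrinj).secondCountableTopology
  exact this

theorem quotient_part (hhom : ∀ x y : M, ∃ f : M ≃ᵢ M, f x = y)
    (G : Subgroup (M ≃ᵢ M)) (hGc : IsClosed (G : Set (M ≃ᵢ M)))
    (hGt : ∀ x y : M, ∃ g ∈ G, g x = y) (o : M) (S : Subgroup G)
    (hS : (S : Set G) = {g : G | (g : M ≃ᵢ M) o = o}) :
    ∃ h : (G ⧸ S) ≃ₜ M, ∀ g : G, h (QuotientGroup.mk g) = (g : M ≃ᵢ M) o := by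
  haveI : SigmaCompactSpace (M ≃ᵢ M) := isoSigmaCompact hhom
  haveI : SigmaCompactSpace G := hGc.sigmaCompactSpace
  letI : MulAction G M :=
    { smul := fun g x => (g : M ≃ᵢ M) x
      one_smul := fun x => rfl
      mul_smul := fun g h x => rfl }
  haveI : ContinuousSMul G M := ⟨continuous_eval.comp
    ((continuous_subtype_val.comp continuous_fst).prodMk continuous_snd)⟩
  haveI : MulAction.IsPretransitive G M := ⟨fun x y => by
    obtain ⟨g, hg, h⟩ := hGt x y
    exact ⟨⟨g, hg⟩, h⟩⟩
  have hopen : IsOpenMap (fun g : G => g • o) := isOpenMap_smul_of_sigmaCompact o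
  set fn : G → M := fun g => g • o with hfn
  have hmemS : ∀ g : G, g ∈ S ↔ g • o = o := by
    intro g
    rw [← SetLike.mem_coe, hS]
    exact Iff.rfl
  have hresp : ∀ a b : G, @Setoid.r _ (QuotientGroup.leftRel S) a b → fn a = fn b := by
    intro a b hab
    rw [QuotientGroup.leftRel_apply] at hab
    have h1 : (a⁻¹ * b) • o = o := (hmemS _).1 hab
    have h2 : a • ((a⁻¹ * b) • o) = a • o := by rw [h1]
    rw [← mul_smul, mul_inv_cancel_left] at h2
    exact h2.symm
  set φ : G ⧸ S → M := fun q => Quotient.liftOn' q fn hresp with hφ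
  have hinj : Function.Injective φ := by
    intro q1 q2
    refine Quotient.inductionOn₂' q1 q2 (fun a b h => ?_)
    apply Quotient.sound'
    rw [QuotientGroup.leftRel_apply]
    rw [hmemS]
    have hab : a • o = b • o := h
    rw [mul_smul]
    show a⁻¹ • (b • o) = o
    rw [← hab, inv_smul_smul]
  have hsurj : Function.Surjective φ := by
    intro x
    obtain ⟨g, hg, hgx⟩ := hGt o x
    exact ⟨QuotientGroup.mk ⟨g, hg⟩, hgx⟩
  have hcont : Continuous φ :=
    Continuous.quotient_liftOn' ((continuous_eval_const o).comp continuous_subtype_val) hresp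
  have hφopen : IsOpenMap φ := by
    intro U hU
    have himg : φ '' U = (fun g : G => g • o) '' ((QuotientGroup.mk : G → G ⧸ S) ⁻¹' U) := by
      ext x
      simp only [mem_image, mem_preimage]
      constructor
      · rintro ⟨q, hq, rfl⟩
        refine Quotient.inductionOn' q (fun g hg => ⟨g, hg, rfl⟩) hq
      · rintro ⟨g, hg, rfl⟩
        exact ⟨QuotientGroup.mk g, hg, rfl⟩
    rw [himg]
    exact hopen _ (hU.preimage (QuotientGroup.isQuotientMap_mk S).continuous)
  exact ⟨Equiv.toHomeomorphOfContinuousOpen (Equiv.ofBijective φ ⟨hinj, hsurj⟩) hcont hφopen,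
    fun g => rfl⟩

end Main

end Topology

end S12

/-- the isometry group of a homogeneous metric space, with the
topology of pointwise convergence, is locally compact, σ-compact and second
countable; moreover for every closed transitive subgroup `G` and stabiliser
`S` of a point `o`, the orbit map induces a homeomorphism `G/S ≃ M`. -/
theorem statement12 (M : Type*) [MetricSpace M] [ConnectedSpace M] [LocallyCompactSpace M]
    (hhom : ∀ x y : M, ∃ f : M ≃ᵢ M, f x = y) :
    letI : TopologicalSpace (M ≃ᵢ M) :=
      TopologicalSpace.induced (fun f : M ≃ᵢ M => (⇑f : M → M)) Pi.topologicalSpace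
    LocallyCompactSpace (M ≃ᵢ M) ∧ SigmaCompactSpace (M ≃ᵢ M) ∧
    SecondCountableTopology (M ≃ᵢ M) ∧
    ∀ G : Subgroup (M ≃ᵢ M), IsClosed (G : Set (M ≃ᵢ M)) →
      (∀ x y : M, ∃ g ∈ G, g x = y) →
      ∀ o : M, ∀ S : Subgroup G, (S : Set G) = {g : G | (g : M ≃ᵢ M) o = o} →
        ∃ h : (G ⧸ S) ≃ₜ M, ∀ g : G, h (QuotientGroup.mk g) = (g : M ≃ᵢ M) o := by
  exact ⟨S12.isoLocallyCompact hhom, S12.isoSigmaCompact hhom, S12.isoSecondCountable hhom,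
    fun G hGc hGt o S hS => S12.quotient_part hhom G hGc hGt o S hS⟩
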